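/- Let G be a finite simple graph on n ≥ 1 vertices with Kirchhoff (Laplacian) matrix K. Then for every 1 ≤ k ≤ n, the k-th smallest eigenvalue of K satisfies λ_k ≥ d_k − (n − k), where d_1 ≤ … ≤ d_n are the vertex degrees of G listed in increasing order. -/

import Mathlib

open Matrix Finset

set_option maxHeartbeats 1000000

/-- For a finite simple graph on `n ≥ 1` vertices with Kirchhoff (Laplacian)
matrix `K`, the `k`-th smallest eigenvalue satisfies `λ_k ≥ d_k - (n - k)`,
where `d_1 ≤ ⋯ ≤ d_n` are the sorted vertex degrees. -/
theorem graph_laplacian_eigenvalue_lower_bound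
    (n : ℕ) (hn : 1 ≤ n) (G : SimpleGraph (Fin n)) [DecidableRel G.Adj]
    (hK : (G.lapMatrix ℝ).IsHermitian)
    (lam : Fin n → ℝ)
    (hlam : lam = hK.eigenvalues ∘ Tuple.sort hK.eigenvalues)
    (d : Fin n → ℕ)
    (hd : d = (fun v => G.degree v) ∘ Tuple.sort (fun v => G.degree v)) :
    ∀ (k : ℕ) (hk1 : 1 ≤ k) (hkn : k ≤ n),
      (d ⟨k - 1, by omega⟩ : ℝ) - ((n - k : ℕ) : ℝ) ≤ lam ⟨k - 1, by omega⟩ := by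
  intro k hk1 hkn
  have hmono_lam : Monotone lam := by rw [hlam]; exact Tuple.monotone_sort _
  have hmono_d : Monotone d := by rw [hd]; exact Tuple.monotone_sort _
  set σ : Equiv.Perm (Fin n) := Tuple.sort hK.eigenvalues with hσ
  set τ : Equiv.Perm (Fin n) := Tuple.sort (fun v => G.degree v) with hτ
  set i0 : Fin n := ⟨k - 1, by omega⟩ with hi0
  set m : ℕ := n - k + 1 with hm
  set jmap : Fin k → Fin n := fun j => ⟨j.1, by have := j.2; omega⟩ with hjmap
  set umap : Fin m → Fin n := fun t => ⟨k - 1 + t.1, by have := t.2; omega⟩ with humap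
  have hjinj : Function.Injective (fun j : Fin k => σ (jmap j)) := by
    intro a b hab
    have h1 : jmap a = jmap b := σ.injective hab
    have h2 : (jmap a).1 = (jmap b).1 := by rw [h1]
    simp only [hjmap] at h2
    exact Fin.ext h2
  have huinj : Function.Injective (fun t : Fin m => τ (umap t)) := by
    intro a b hab
    have h1 : umap a = umap b := τ.injective hab
    have h2 : (umap a).1 = (umap b).1 := by rw [h1]
    simp only [humap] at h2
    exact Fin.ext (by omega)
  -- the vectors and subspaces
  set g : Fin k → (Fin n → ℝ) := fun j => hK.eigenvectorBasis (σ (jmap j)) with hg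
  set f : Fin m → (Fin n → ℝ) := fun t => Pi.single (τ (umap t)) 1 with hf
  set μ : Fin k → ℝ := fun j => hK.eigenvalues (σ (jmap j)) with hμ
  set U : Finset (Fin n) := Finset.image (fun t => τ (umap t)) Finset.univ with hU
  have hUcard : U.card = m := by
    rw [hU, Finset.card_image_of_injective _ huinj, Finset.card_univ, Fintype.card_fin]
  have hUdeg : ∀ v ∈ U, d i0 ≤ G.degree v := by
    intro v hv
    obtain ⟨t, -, rfl⟩ := Finset.mem_image.mp hv
    have h1 : G.degree (τ (umap t)) = d (umap t) := by rw [hd]; rfl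
    rw [h1]
    exact hmono_d (by simp only [hi0, humap]; exact Fin.mk_le_mk.mpr (Nat.le_add_right _ _))
  -- the counting estimate
  have hcard : ∀ v ∈ U,
      ((d i0 : ℝ) - ((n - k : ℕ) : ℝ)) ≤ ((G.neighborFinset v \ U).card : ℝ) := by
    intro v hv
    have h1 : (G.neighborFinset v ∩ U).card ≤ n - k := by
      have hsub : G.neighborFinset v ∩ U ⊆ U.erase v := by
        intro i hi
        rcases Finset.mem_inter.mp hi with ⟨hi1, hi2⟩
        exact Finset.mem_erase.mpr ⟨((G.mem_neighborFinset v i).mp hi1).ne', hi2⟩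
      calc (G.neighborFinset v ∩ U).card ≤ (U.erase v).card := Finset.card_le_card hsub
        _ = U.card - 1 := Finset.card_erase_of_mem hv
        _ ≤ n - k := by rw [hUcard]; omega
    have h3 : (G.neighborFinset v \ U).card + (G.neighborFinset v ∩ U).card = G.degree v := by
      rw [Finset.card_sdiff_add_card_inter]; rfl
    have h2 : d i0 ≤ G.degree v := hUdeg v hv
    have h4 : d i0 ≤ (G.neighborFinset v \ U).card + (n - k) := by omega
    have h5 : ((d i0 : ℕ) : ℝ) ≤ ((G.neighborFinset v \ U).card : ℝ) + ((n - k : ℕ) : ℝ) := by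
      exact_mod_cast h4
    linarith
  -- linear independence and dimensions
  have hg_li : LinearIndependent ℝ g := by
    have h := ((hK.eigenvectorBasis.orthonormal.linearIndependent).comp _ hjinj).map'
      (WithLp.linearEquiv 2 ℝ (Fin n → ℝ)).toLinearMap (WithLp.linearEquiv 2 ℝ (Fin n → ℝ)).ker
    exact h
  have hf_li : LinearIndependent ℝ f := by
    rw [Fintype.linearIndependent_iff]
    intro e he t
    have := congrFun he (τ (umap t))
    simp only [Finset.sum_apply, Pi.smul_apply, hf, Pi.single_apply, smul_eq_mul,
      Pi.zero_apply] at this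
    rwa [Finset.sum_eq_single t (fun b _ hb => by
        rw [if_neg (fun hh => hb (huinj hh.symm)), mul_zero])
      (fun hb => absurd (Finset.mem_univ t) hb), if_pos rfl, mul_one] at this
  set V : Submodule ℝ (Fin n → ℝ) := Submodule.span ℝ (Set.range g) with hV
  set W : Submodule ℝ (Fin n → ℝ) := Submodule.span ℝ (Set.range f) with hW
  have hVrank : Module.finrank ℝ V = k := by
    rw [hV, finrank_span_eq_card hg_li, Fintype.card_fin]
  have hWrank : Module.finrank ℝ W = m := by
    rw [hW, finrank_span_eq_card hf_li, Fintype.card_fin]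
  -- a nonzero vector in the intersection
  obtain ⟨x, hxmem, hxne⟩ : ∃ x : Fin n → ℝ, x ∈ V ⊓ W ∧ x ≠ 0 := by
    have htot : Module.finrank ℝ (Fin n → ℝ) = n := by
      simp [Module.finrank_pi]
    have hsum := Submodule.finrank_sup_add_finrank_inf_eq V W
    have hle : Module.finrank ℝ ↥(V ⊔ W) ≤ n := by simpa [htot] using Submodule.finrank_le (V ⊔ W)
    have hpos : 0 < Module.finrank ℝ ↥(V ⊓ W) := by
      rw [hVrank, hWrank] at hsum; omega
    have hne : V ⊓ W ≠ ⊥ := by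
      intro h
      rw [h, finrank_bot] at hpos
      exact lt_irrefl 0 hpos
    exact Submodule.exists_mem_ne_zero_of_ne_bot hne
  obtain ⟨hxV, hxW⟩ := Submodule.mem_inf.mp hxmem
  obtain ⟨c, hc⟩ := (Submodule.mem_span_range_iff_exists_fun ℝ).mp hxV
  obtain ⟨e, he⟩ := (Submodule.mem_span_range_iff_exists_fun ℝ).mp hxW
  -- orthonormality in dot-product form
  have hgg : ∀ a b : Fin k, (∑ v, g a v * g b v) = if a = b then 1 else 0 := by
    intro a b
    have horth := orthonormal_iff_ite.mp hK.eigenvectorBasis.orthonormal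
      (σ (jmap a)) (σ (jmap b))
    have hdot : (∑ v, g a v * g b v) =
        (inner ℝ (hK.eigenvectorBasis (σ (jmap a))) (hK.eigenvectorBasis (σ (jmap b))) : ℝ) := by
      simp [hg, PiLp.inner_apply, mul_comm]
    rw [hdot, horth]
    by_cases h : a = b
    · simp [h]
    · rw [if_neg (fun hh => h (hjinj hh)), if_neg h]
  have hdots : ∀ a b : Fin k → ℝ,
      (∑ j, a j • g j) ⬝ᵥ (∑ j', b j' • g j') = ∑ j, a j * b j := by
    intro a b
    have h1 : (∑ j, a j • g j) ⬝ᵥ (∑ j', b j' • g j')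
        = ∑ v, (∑ j, a j * g j v) * (∑ j', b j' * g j' v) := by
      simp only [dotProduct, Finset.sum_apply, Pi.smul_apply, smul_eq_mul]
    rw [h1]
    calc ∑ v, (∑ j, a j * g j v) * (∑ j', b j' * g j' v)
        = ∑ v, ∑ j, ∑ j', (a j * g j v) * (b j' * g j' v) := by
          refine Finset.sum_congr rfl fun v _ => ?_
          rw [Finset.sum_mul_sum]
      _ = ∑ j, ∑ v, ∑ j', (a j * g j v) * (b j' * g j' v) := Finset.sum_comm
      _ = ∑ j, ∑ j', ∑ v, (a j * g j v) * (b j' * g j' v) :=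
          Finset.sum_congr rfl fun j _ => Finset.sum_comm
      _ = ∑ j, ∑ j', (a j * b j') * ∑ v, g j v * g j' v := by
          refine Finset.sum_congr rfl fun j _ => Finset.sum_congr rfl fun j' _ => ?_
          rw [Finset.mul_sum]
          exact Finset.sum_congr rfl fun v _ => by ring
      _ = ∑ j, a j * b j := by
          simp only [hgg, mul_ite, mul_one, mul_zero, Finset.sum_ite_eq,
            Finset.mem_univ, if_true]
  -- the quadratic form via eigenvalues
  have hmul : G.lapMatrix ℝ *ᵥ x = ∑ j, (c j * μ j) • g j := by
    rw [← hc]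
    have : (G.lapMatrix ℝ) *ᵥ (∑ j, c j • g j) = (G.lapMatrix ℝ).mulVecLin (∑ j, c j • g j) := rfl
    rw [this, map_sum]
    refine Finset.sum_congr rfl fun j _ => ?_
    rw [_root_.map_smul, Matrix.mulVecLin_apply]
    have hKg : G.lapMatrix ℝ *ᵥ g j = hK.eigenvalues (σ (jmap j)) • g j :=
      hK.mulVec_eigenvectorBasis (σ (jmap j))
    rw [hKg, smul_smul]
  have hE1 : x ⬝ᵥ (G.lapMatrix ℝ *ᵥ x) = ∑ j, c j * (c j * μ j) := by
    rw [hmul, ← hc, hdots]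
  have hE2 : x ⬝ᵥ x = ∑ j, c j * c j := by
    conv_lhs => rw [← hc]
    rw [hdots]
  set N : ℝ := x ⬝ᵥ x with hN
  have hNpos : 0 < N := by
    obtain ⟨v, hv⟩ := Function.ne_iff.mp hxne
    have h1 : N = ∑ v, x v * x v := rfl
    rw [h1]
    exact Finset.sum_pos' (fun i _ => mul_self_nonneg _)
      ⟨v, Finset.mem_univ v, mul_self_pos.mpr hv⟩
  -- upper bound on the Rayleigh quotient
  have hupper : x ⬝ᵥ (G.lapMatrix ℝ *ᵥ x) ≤ lam i0 * N := by
    rw [hE1, hE2]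
    have hle : ∀ j : Fin k, μ j ≤ lam i0 := by
      intro j
      have h1 : μ j = lam (jmap j) := by rw [hlam]; rfl
      rw [h1]
      refine hmono_lam ?_
      simp only [hjmap, hi0]
      exact Fin.mk_le_mk.mpr (by have := j.2; omega)
    calc ∑ j, c j * (c j * μ j) ≤ ∑ j, c j * (c j * lam i0) := by
          refine Finset.sum_le_sum fun j _ => ?_
          have h0 : 0 ≤ c j * c j := mul_self_nonneg _
          nlinarith [hle j]
      _ = lam i0 * ∑ j, c j * c j := by
          rw [Finset.mul_sum]; exact Finset.sum_congr rfl fun j _ => by ring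
  -- support of x
  have hsupp : ∀ v, v ∉ U → x v = 0 := by
    intro v hv
    have hne : ∀ t : Fin m, τ (umap t) ≠ v := fun t h =>
      hv (hU ▸ Finset.mem_image.mpr ⟨t, Finset.mem_univ t, h⟩)
    rw [← he, Finset.sum_apply]
    refine Finset.sum_eq_zero fun t _ => ?_
    have : f t v = 0 := Pi.single_eq_of_ne (fun h => hne t h.symm) 1
    rw [Pi.smul_apply, this, smul_zero]
  have hNU : ∑ v ∈ U, x v * x v = N := by
    rw [hN]
    have h1 : N = ∑ v, x v * x v := rfl
    rw [show x ⬝ᵥ x = ∑ v, x v * x v from rfl]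
    exact Finset.sum_subset (Finset.subset_univ U) (fun v _ hv => by rw [hsupp v hv, mul_zero])
  -- lower bound on the quadratic form
  set Dr : ℝ := (d i0 : ℝ) with hDr
  set nk : ℝ := ((n - k : ℕ) : ℝ) with hnk
  have hquad : x ⬝ᵥ (G.lapMatrix ℝ *ᵥ x)
      = (∑ i, ∑ j, if G.Adj i j then (x i - x j)^2 else 0) / 2 := by
    rw [← Matrix.toLinearMap₂'_apply', SimpleGraph.lapMatrix_toLinearMap₂']
  have claimA : ∀ v ∈ U,
      (Dr - nk) * (x v * x v) ≤ ∑ j, if G.Adj v j then (x v - x j)^2 else 0 := by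
    intro v hv
    have h1 : ∑ j, (if G.Adj v j then (x v - x j)^2 else 0)
        = ∑ j ∈ G.neighborFinset v, (x v - x j)^2 := by
      rw [SimpleGraph.neighborFinset_eq_filter, Finset.sum_filter]
    have h2 : ∑ j ∈ G.neighborFinset v \ U, (x v - x j)^2
        ≤ ∑ j ∈ G.neighborFinset v, (x v - x j)^2 :=
      Finset.sum_le_sum_of_subset_of_nonneg (Finset.sdiff_subset)
        (fun j _ _ => sq_nonneg _)
    have h3 : ∑ j ∈ G.neighborFinset v \ U, (x v - x j)^2
        = ((G.neighborFinset v \ U).card : ℝ) * (x v * x v) := by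
      rw [Finset.sum_congr rfl (fun j hj => by
        rw [hsupp j (Finset.mem_sdiff.mp hj).2, sub_zero, sq]), Finset.sum_const,
        nsmul_eq_mul]
    have h4 := hcard v hv
    have h5 : (Dr - nk) * (x v * x v) ≤ ((G.neighborFinset v \ U).card : ℝ) * (x v * x v) :=
      mul_le_mul_of_nonneg_right h4 (mul_self_nonneg _)
    rw [h1]
    linarith [h3 ▸ h5, h2]
  have claimB : ∑ v ∈ U, (Dr - nk) * (x v * x v)
      ≤ ∑ i ∈ Finset.univ \ U, ∑ j, if G.Adj i j then (x i - x j)^2 else 0 := by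
    have step1 : ∀ i ∈ Finset.univ \ U,
        ∑ j ∈ U, (if G.Adj i j then x j * x j else 0)
          ≤ ∑ j, if G.Adj i j then (x i - x j)^2 else 0 := by
      intro i hi
      have hxi : x i = 0 := hsupp i (Finset.mem_sdiff.mp hi).2
      have heq : ∀ j, (if G.Adj i j then x j * x j else 0)
          = (if G.Adj i j then (x i - x j)^2 else 0) := by
        intro j
        by_cases h : G.Adj i j
        · simp only [h, if_true, hxi]; ring
        · simp [h]
      calc ∑ j ∈ U, (if G.Adj i j then x j * x j else 0)
          = ∑ j ∈ U, (if G.Adj i j then (x i - x j)^2 else 0) :=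
            Finset.sum_congr rfl fun j _ => heq j
        _ ≤ ∑ j, if G.Adj i j then (x i - x j)^2 else 0 :=
            Finset.sum_le_sum_of_subset_of_nonneg (Finset.subset_univ U)
              (fun j _ _ => by positivity)
    have step2 : ∑ v ∈ U, (Dr - nk) * (x v * x v)
        ≤ ∑ i ∈ Finset.univ \ U, ∑ j ∈ U, (if G.Adj i j then x j * x j else 0) := by
      rw [Finset.sum_comm]
      refine Finset.sum_le_sum fun j hj => ?_
      have hfil : (Finset.univ \ U).filter (fun i => G.Adj i j)
          = G.neighborFinset j \ U := by
        ext i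
        simp [SimpleGraph.mem_neighborFinset, G.adj_comm, and_comm]
      have h6 : ∑ i ∈ Finset.univ \ U, (if G.Adj i j then x j * x j else 0)
          = ((G.neighborFinset j \ U).card : ℝ) * (x j * x j) := by
        rw [← Finset.sum_filter, hfil, Finset.sum_const, nsmul_eq_mul]
      rw [h6]
      exact mul_le_mul_of_nonneg_right (hcard j hj) (mul_self_nonneg _)
    calc ∑ v ∈ U, (Dr - nk) * (x v * x v)
        ≤ ∑ i ∈ Finset.univ \ U, ∑ j ∈ U, (if G.Adj i j then x j * x j else 0) := step2
      _ ≤ ∑ i ∈ Finset.univ \ U, ∑ j, (if G.Adj i j then (x i - x j)^2 else 0) :=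
          Finset.sum_le_sum step1
  have hlow : (Dr - nk) * N ≤ x ⬝ᵥ (G.lapMatrix ℝ *ᵥ x) := by
    have hsplit : ∑ i, ∑ j, (if G.Adj i j then (x i - x j)^2 else 0)
        = (∑ i ∈ Finset.univ \ U, ∑ j, (if G.Adj i j then (x i - x j)^2 else 0))
          + ∑ i ∈ U, ∑ j, (if G.Adj i j then (x i - x j)^2 else 0) :=
      (Finset.sum_sdiff (Finset.subset_univ U)).symm
    have hA : ∑ v ∈ U, (Dr - nk) * (x v * x v)
        ≤ ∑ i ∈ U, ∑ j, (if G.Adj i j then (x i - x j)^2 else 0) :=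
      Finset.sum_le_sum claimA
    have hB := claimB
    have hmulsum : ∑ v ∈ U, (Dr - nk) * (x v * x v) = (Dr - nk) * N := by
      rw [← Finset.mul_sum, hNU]
    rw [hquad, hsplit]
    rw [hmulsum] at hA hB
    linarith
  -- conclusion
  have hfinal : Dr - nk ≤ lam i0 :=
    le_of_mul_le_mul_right (le_trans hlow hupper) hNpos
  exact hfinal
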